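/- Let ε > 0 and set c(ε) = (2π²ε)^{−2/3}. The maximal solution (α, β) of the system (case aμ = −1) with initial conditions α(0) = √(c(ε))·ε and β(0) = √(c(ε)) is defined on all of [0, ∞), and α(t) → (2π²)^{−1/3} and β(t) → (2π²)^{−1/3} as t → ∞. (This is the ODE content of Theorem 2 in the case aμ = −1: for every fiber length ε > 0 the volume-normalized Berger metric flows back to the volume-normalized round metric on S³.) -/

import Mathlib

open Real Filter Set Topology
open scoped ENNReal

/-- The vector field of the volume-normalized spinor-flow system on Berger spheres
in the case `aμ = -1`. -/
noncomputable def G2 (x y : ℝ) : ℝ × ℝ :=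
  (-(1/4) * x^3 / y^4 + (1/12) * x / y^2 + (1/6) * (1/x),
   (1/8) * x^2 / y^3 - (1/12) * y / x^2 - (1/24) * (1/y))
/-- `(α, β)` is a solution of the normalized system (case `aμ = -1`) on `J`. -/
def IsSolutionOn (α β : ℝ → ℝ) (J : Set ℝ) : Prop :=
  ∀ t ∈ J, α t ≠ 0 ∧ β t ≠ 0 ∧
    HasDerivAt α (G2 (α t) (β t)).1 t ∧
    HasDerivAt β (G2 (α t) (β t)).2 t

/-- The interval `[0, T)` as a subset of `ℝ`, where `T ∈ (0,∞]`. -/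
def domainUpTo (T : ℝ≥0∞) : Set ℝ := {t : ℝ | 0 ≤ t ∧ ENNReal.ofReal t < T}

/-- `(α, β)` is a maximal solution on `[0, T)`: it is a solution there and cannot be
extended to a solution on a strictly larger interval to the right. -/
def IsMaxSolution (α β : ℝ → ℝ) (T : ℝ≥0∞) : Prop :=
  0 < T ∧ IsSolutionOn α β (domainUpTo T) ∧
    ¬ ∃ (T' : ℝ≥0∞) (α' β' : ℝ → ℝ), T < T' ∧ IsSolutionOn α' β' (domainUpTo T') ∧
        ∀ t ∈ domainUpTo T, α' t = α t ∧ β' t = β t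

section Auxiliary

lemma stays_pos {f : ℝ → ℝ} {t : ℝ} (ht : 0 ≤ t) (hc : ContinuousOn f (Set.Icc 0 t))
    (hnz : ∀ s ∈ Set.Icc 0 t, f s ≠ 0) (h0 : 0 < f 0) : 0 < f t := by
  by_contra h
  have h0' : (0:ℝ) ∈ Set.Icc (f t) (f 0) := ⟨not_lt.1 h, h0.le⟩
  obtain ⟨s, hs, hfs⟩ := intermediate_value_Icc' ht hc h0'
  exact hnz s hs hfs

lemma antitoneOn_of_hasDerivAt_nonpos {J : Set ℝ} (hJ : Convex ℝ J) {g g' : ℝ → ℝ}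
    (hg : ∀ t ∈ J, HasDerivAt g (g' t) t) (h0 : ∀ t ∈ J, g' t ≤ 0) : AntitoneOn g J := by
  apply antitoneOn_of_deriv_nonpos hJ
  · exact fun t ht => (hg t ht).continuousAt.continuousWithinAt
  · exact fun t ht => ((hg t (interior_subset ht)).differentiableAt).differentiableWithinAt
  · intro t ht
    rw [(hg t (interior_subset ht)).deriv]
    exact h0 t (interior_subset ht)

lemma monotoneOn_of_hasDerivAt_nonneg {J : Set ℝ} (hJ : Convex ℝ J) {g g' : ℝ → ℝ}
    (hg : ∀ t ∈ J, HasDerivAt g (g' t) t) (h0 : ∀ t ∈ J, 0 ≤ g' t) : MonotoneOn g J := by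
  apply monotoneOn_of_deriv_nonneg hJ
  · exact fun t ht => (hg t ht).continuousAt.continuousWithinAt
  · exact fun t ht => ((hg t (interior_subset ht)).differentiableAt).differentiableWithinAt
  · intro t ht
    rw [(hg t (interior_subset ht)).deriv]
    exact h0 t (interior_subset ht)

/-- Backward-in-time Gronwall: if `E' = -(k E)` with `|k| ≤ C` and `E b = 0` then `E 0 = 0`. -/
lemma gronwall_zero {b C : ℝ} (hb : 0 ≤ b) {E k : ℝ → ℝ}
    (hE : ∀ t ∈ Set.Icc 0 b, HasDerivAt E (-(k t * E t)) t)
    (hk : ∀ t ∈ Set.Icc 0 b, |k t| ≤ C) (hEb : E b = 0) : E 0 = 0 := by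
  set g : ℝ → ℝ := fun s => E (b - s) with hgdef
  have hg : ∀ s ∈ Set.Icc 0 b, HasDerivAt g (k (b - s) * g s) s := by
    intro s hs
    have hmem : b - s ∈ Set.Icc 0 b := ⟨by linarith [hs.2], by linarith [hs.1]⟩
    have h1 : HasDerivAt (fun s : ℝ => b - s) (-1) s := by
      simpa using (hasDerivAt_const s b).fun_sub (hasDerivAt_id s)
    have := (hE (b - s) hmem).comp s h1
    simpa [hgdef, Function.comp_def] using this.congr_deriv (by ring)
  have key : ∀ x ∈ Set.Icc 0 b, ‖g x‖ ≤ gronwallBound 0 C 0 (x - 0) := by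
    apply norm_le_gronwallBound_of_norm_deriv_right_le
    · exact fun s hs => (hg s hs).continuousAt.continuousWithinAt
    · exact fun s hs => (hg s (Set.Ico_subset_Icc_self hs)).hasDerivWithinAt
    · simp [hgdef, hEb]
    · intro s hs
      have hmem : b - s ∈ Set.Icc 0 b :=
        ⟨by linarith [hs.2.le], by linarith [hs.1]⟩
      have := hk (b - s) hmem
      calc ‖k (b - s) * g s‖ = |k (b - s)| * ‖g s‖ := by
            rw [norm_mul]; rfl
        _ ≤ C * ‖g s‖ + 0 := by
            rw [add_zero]
            exact mul_le_mul_of_nonneg_right this (norm_nonneg _)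
  have := key b ⟨hb, le_rfl⟩
  rw [gronwallBound_ε0] at this
  simp only [zero_mul] at this
  have : ‖g b‖ ≤ 0 := this
  have : g b = 0 := by simpa [norm_eq_abs, abs_nonpos_iff] using this
  simpa [hgdef] using this

lemma cube_upper {x B : ℝ} (hx : 0 < x) (h : x^3 ≤ B) : x ≤ max 1 B := by
  rcases le_or_gt x 1 with h1 | h1
  · exact le_trans h1 (le_max_left _ _)
  · have h2 : 1 ≤ x^2 := by nlinarith
    have h3 : x * 1 ≤ x * x^2 := mul_le_mul_of_nonneg_left h2 hx.le
    have : x ≤ x^3 := by nlinarith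
    exact le_trans (le_trans this h) (le_max_right _ _)

lemma cube_lower {x v : ℝ} (hx : 0 < x) (hv : 0 < v) (h : v ≤ x^3) : min 1 v ≤ x := by
  rcases le_or_gt 1 x with h1 | h1
  · exact le_trans (min_le_left _ _) h1
  · have h2 : x^2 ≤ 1 := by nlinarith
    have h3 : x * x^2 ≤ x * 1 := mul_le_mul_of_nonneg_left h2 hx.le
    have : x^3 ≤ x := by nlinarith
    exact le_trans (min_le_right _ _) (le_trans h this)

lemma domain_eq_Ico {T : ℝ≥0∞} (hT : T ≠ ⊤) : domainUpTo T = Set.Ico 0 T.toReal := by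
  ext t
  simp only [domainUpTo, Set.mem_setOf_eq, Set.mem_Ico]
  constructor
  · rintro ⟨h1, h2⟩; exact ⟨h1, (ENNReal.ofReal_lt_iff_lt_toReal h1 hT).mp h2⟩
  · rintro ⟨h1, h2⟩; exact ⟨h1, (ENNReal.ofReal_lt_iff_lt_toReal h1 hT).mpr h2⟩

lemma domain_top : domainUpTo ⊤ = Set.Ici 0 := by
  ext t; simp [domainUpTo, ENNReal.ofReal_lt_top]

lemma domain_convex (T : ℝ≥0∞) : Convex ℝ (domainUpTo T) := by
  rcases eq_or_ne T ⊤ with rfl | hT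
  · rw [domain_top]; exact convex_Ici 0
  · rw [domain_eq_Ico hT]; exact convex_Ico 0 T.toReal

lemma domain_mem_zero {T : ℝ≥0∞} (hT : 0 < T) : (0:ℝ) ∈ domainUpTo T := by
  refine ⟨le_rfl, ?_⟩; simpa using hT

lemma domain_Icc_subset {T : ℝ≥0∞} {t : ℝ} (ht : t ∈ domainUpTo T) :
    Set.Icc 0 t ⊆ domainUpTo T := by
  intro s hs
  exact ⟨hs.1, lt_of_le_of_lt (ENNReal.ofReal_le_ofReal hs.2) ht.2⟩

noncomputable def Fv (v x : ℝ) : ℝ := -((3*x^3+2*v)*(x^3-v))/(12*v^2*x)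

lemma G2_fst_eq {x y : ℝ} (hx : x ≠ 0) (hy : y ≠ 0) :
    (G2 x y).1 = Fv (x * y^2) x := by
  simp only [G2, Fv]; field_simp; ring

lemma deriv_cube_identity {v x : ℝ} (hx : x ≠ 0) (hv : v ≠ 0) :
    3 * x^2 * Fv v x = -((x * (3*x^3 + 2*v) / (4*v^2)) * (x^3 - v)) := by
  simp only [Fv]; field_simp; ring

lemma G2_invariant {x y : ℝ} (hx : x ≠ 0) (hy : y ≠ 0) :
    (G2 x y).1 * y^2 + x * (2 * y * (G2 x y).2) = 0 := by
  simp only [G2]; field_simp; ring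

lemma Fv_nonneg {v x : ℝ} (hx : 0 < x) (hv : 0 < v) (h : x^3 ≤ v) : 0 ≤ Fv v x := by
  apply div_nonneg _ (by positivity)
  have h1 : 0 < 3*x^3 + 2*v := by positivity
  nlinarith

lemma Fv_nonpos {v x : ℝ} (hx : 0 < x) (hv : 0 < v) (h : v ≤ x^3) : Fv v x ≤ 0 := by
  apply div_nonpos_of_nonpos_of_nonneg _ (by positivity)
  have h1 : 0 < 3*x^3 + 2*v := by positivity
  nlinarith

lemma E_deriv {v : ℝ} (hv : v ≠ 0) {α : ℝ → ℝ} {t : ℝ} (hx : α t ≠ 0)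
    (hd : HasDerivAt α (Fv v (α t)) t) :
    HasDerivAt (fun s => (α s^3 - v)^2)
      (-(2 * (α t * (3*α t^3+2*v)/(4*v^2)) * (α t^3 - v)^2)) t := by
  have hh : HasDerivAt (fun s => α s^3 - v) (3*α t^2 * Fv v (α t)) t := by
    have := (hd.fun_pow 3).sub_const v
    exact this.congr_deriv (by push_cast; ring)
  have hE := hh.fun_pow 2
  refine hE.congr_deriv ?_
  have hid := deriv_cube_identity hx hv
  push_cast
  rw [show ((2:ℝ) * (α t ^3 - v) ^ (2-1) * (3*α t^2 * Fv v (α t)))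
      = 2 * (α t ^3 - v) * (3*α t^2 * Fv v (α t)) by ring, hid]
  ring

noncomputable def Vf : ℝ × ℝ → ℝ × ℝ := fun q => G2 q.1 q.2

lemma contDiffAt_Vf {p : ℝ × ℝ} (h1 : p.1 ≠ 0) (h2 : p.2 ≠ 0) :
    ContDiffAt ℝ 1 Vf p := by
  have hfst : ContDiffAt ℝ 1 (fun q : ℝ × ℝ => q.1) p := contDiffAt_fst
  have hsnd : ContDiffAt ℝ 1 (fun q : ℝ × ℝ => q.2) p := contDiffAt_snd
  apply ContDiffAt.prodMk
  · apply ContDiffAt.add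
    apply ContDiffAt.add
    · exact ((contDiffAt_const (c := -(1/4:ℝ))).mul (hfst.pow 3)).div (hsnd.pow 4)
        (pow_ne_zero _ h2)
    · exact ((contDiffAt_const (c := (1/12:ℝ))).mul hfst).div (hsnd.pow 2)
        (pow_ne_zero _ h2)
    · exact (contDiffAt_const (c := (1/6:ℝ))).mul ((contDiffAt_const (c := (1:ℝ))).div hfst h1)
  · apply ContDiffAt.sub
    apply ContDiffAt.sub
    · exact ((contDiffAt_const (c := (1/8:ℝ))).mul (hfst.pow 2)).div (hsnd.pow 3)
        (pow_ne_zero _ h2)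
    · exact ((contDiffAt_const (c := (1/12:ℝ))).mul hsnd).div (hfst.pow 2)
        (pow_ne_zero _ h1)
    · exact (contDiffAt_const (c := (1/24:ℝ))).mul ((contDiffAt_const (c := (1:ℝ))).div hsnd h2)

lemma tendsto_endpoint {f : ℝ → ℝ} {T₀ m M : ℝ} (hT₀ : 0 < T₀)
    (hbd : ∀ t ∈ Set.Ico 0 T₀, m ≤ f t ∧ f t ≤ M)
    (hmono : MonotoneOn f (Set.Ico 0 T₀) ∨ AntitoneOn f (Set.Ico 0 T₀)) :
    ∃ L, m ≤ L ∧ Tendsto f (𝓝[<] T₀) (𝓝 L) := by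
  set g : ℝ → ℝ := fun t => f (max t 0) with hgdef
  have hmem : ∀ t ∈ Set.Iio T₀, max t 0 ∈ Set.Ico 0 T₀ := by
    intro t ht
    exact ⟨le_max_right _ _, max_lt ht hT₀⟩
  have hcongr : f =ᶠ[𝓝[<] T₀] g := by
    filter_upwards [Ioo_mem_nhdsLT_of_mem (Set.right_mem_Ioc.mpr hT₀)] with t ht
    simp only [hgdef]
    rw [max_eq_left ht.1.le]
  have h0mem : (0:ℝ) ∈ Set.Iio T₀ := hT₀
  rcases hmono with hmon | hant
  · have hg : MonotoneOn g (Set.Iio T₀) := fun s hs t ht hst =>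
      hmon (hmem s hs) (hmem t ht) (max_le_max hst le_rfl)
    have hbdd : BddAbove (g '' Set.Iio T₀) := by
      refine ⟨M, ?_⟩
      rintro x ⟨t, ht, rfl⟩
      exact (hbd _ (hmem t ht)).2
    refine ⟨sSup (g '' Set.Iio T₀), ?_, ?_⟩
    · refine le_trans ?_ (le_csSup hbdd ⟨0, h0mem, rfl⟩)
      exact (hbd _ (hmem 0 h0mem)).1
    · exact (hg.tendsto_nhdsLT hbdd).congr' hcongr.symm
  · have hg : AntitoneOn g (Set.Iio T₀) := fun s hs t ht hst =>
      hant (hmem s hs) (hmem t ht) (max_le_max hst le_rfl)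
    have hbdd : BddBelow (g '' Set.Iio T₀) := by
      refine ⟨m, ?_⟩
      rintro x ⟨t, ht, rfl⟩
      exact (hbd _ (hmem t ht)).1
    refine ⟨sInf (g '' Set.Iio T₀), ?_, ?_⟩
    · refine le_csInf ⟨g 0, ⟨0, h0mem, rfl⟩⟩ ?_
      rintro x ⟨t, ht, rfl⟩
      exact (hbd _ (hmem t ht)).1
    · exact (hg.tendsto_nhdsLT hbdd).congr' hcongr.symm

lemma cube_inj {x y : ℝ} (hx : 0 ≤ x) (hy : 0 ≤ y) (h : x^3 = y^3) : x = y := by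
  rcases lt_trichotomy x y with hlt | heq | hgt
  · exact absurd h (ne_of_lt (pow_lt_pow_left₀ hlt hx three_ne_zero))
  · exact heq
  · exact absurd h (ne_of_gt (pow_lt_pow_left₀ hgt hy three_ne_zero))

theorem core {T : ℝ≥0∞} {α β : ℝ → ℝ} (hT : 0 < T)
    (hsol : IsSolutionOn α β (domainUpTo T)) (ha0 : 0 < α 0) (hb0 : 0 < β 0) :
    ∃ m M : ℝ, 0 < m ∧
      (∀ t ∈ domainUpTo T, m ≤ α t ∧ α t ≤ M ∧ 0 < β t ∧
        α t * β t ^ 2 = α 0 * β 0 ^ 2 ∧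
        HasDerivAt α (Fv (α 0 * β 0 ^ 2) (α t)) t ∧
        β t = Real.sqrt ((α 0 * β 0 ^ 2) / α t)) ∧
      (MonotoneOn α (domainUpTo T) ∨ AntitoneOn α (domainUpTo T)) := by
  set J := domainUpTo T with hJdef
  set v := α 0 * β 0 ^ 2 with hvdef
  have hv : 0 < v := by positivity
  -- continuity on initial segments
  have hcontα : ∀ t ∈ J, ContinuousOn α (Set.Icc 0 t) := fun t ht s hs =>
    (hsol s (domain_Icc_subset ht hs)).2.2.1.continuousAt.continuousWithinAt
  have hcontβ : ∀ t ∈ J, ContinuousOn β (Set.Icc 0 t) := fun t ht s hs =>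
    (hsol s (domain_Icc_subset ht hs)).2.2.2.continuousAt.continuousWithinAt
  -- positivity
  have hposα : ∀ t ∈ J, 0 < α t := by
    intro t ht
    exact stays_pos ht.1 (hcontα t ht)
      (fun s hs => (hsol s (domain_Icc_subset ht hs)).1) ha0
  have hposβ : ∀ t ∈ J, 0 < β t := by
    intro t ht
    exact stays_pos ht.1 (hcontβ t ht)
      (fun s hs => (hsol s (domain_Icc_subset ht hs)).2.1) hb0
  -- the invariant αβ² = v
  have hvol : ∀ t ∈ J, α t * β t ^ 2 = v := by
    intro t ht
    have hW : ∀ s ∈ J, HasDerivAt (fun u => α u * β u ^ 2) 0 s := by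
      intro s hs
      obtain ⟨hαne, hβne, hdα, hdβ⟩ := hsol s hs
      have h1 : HasDerivAt (fun u => β u ^ 2) (2 * β s * (G2 (α s) (β s)).2) s := by
        have := hdβ.fun_pow 2
        refine this.congr_deriv ?_; push_cast; ring
      have := hdα.fun_mul h1
      refine this.congr_deriv ?_
      have key := G2_invariant hαne hβne
      linarith [key]
    have := constant_of_has_deriv_right_zero
      (f := fun u => α u * β u ^ 2) (a := 0) (b := t)
      (fun s hs => ((hW s (domain_Icc_subset ht hs)).continuousAt).continuousWithinAt)
      (fun s hs => (hW s (domain_Icc_subset ht (Set.Ico_subset_Icc_self hs))).hasDerivWithinAt)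
    exact this t ⟨ht.1, le_rfl⟩
  -- scalar ODE for α
  have hscalar : ∀ t ∈ J, HasDerivAt α (Fv v (α t)) t := by
    intro t ht
    have := (hsol t ht).2.2.1
    rwa [G2_fst_eq (hsol t ht).1 (hsol t ht).2.1, hvol t ht] at this
  -- β in terms of α
  have hbeta : ∀ t ∈ J, β t = Real.sqrt (v / α t) := by
    intro t ht
    have h2 : β t ^ 2 = v / α t := by
      rw [eq_div_iff (hposα t ht).ne']
      linarith [hvol t ht]
    rw [← h2, Real.sqrt_sq (hposβ t ht).le]
  -- Lyapunov function E and its derivative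
  set k : ℝ → ℝ := fun t => α t * (3*α t^3 + 2*v)/(4*v^2) with hkdef
  set E : ℝ → ℝ := fun t => (α t^3 - v)^2 with hEdef
  have hE : ∀ t ∈ J, HasDerivAt E (-(2 * k t * E t)) t := by
    intro t ht
    exact E_deriv hv.ne' (hposα t ht).ne' (hscalar t ht)
  have hknonneg : ∀ t ∈ J, 0 ≤ k t := by
    intro t ht
    have h1 := hposα t ht
    have h2 : 0 ≤ α t * (3*α t^3 + 2*v) := by positivity
    exact div_nonneg h2 (by positivity)
  -- E is antitone
  have hEanti : AntitoneOn E J := by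
    apply antitoneOn_of_hasDerivAt_nonpos (domain_convex T) hE
    intro t ht
    have h1 := hknonneg t ht
    have h2 : 0 ≤ E t := sq_nonneg _
    nlinarith
  have h0J : (0:ℝ) ∈ J := domain_mem_zero hT
  -- upper bound
  set M : ℝ := max 1 (v + |α 0 ^3 - v|) with hMdef
  have hub : ∀ t ∈ J, α t ≤ M := by
    intro t ht
    have hEt : E t ≤ E 0 := hEanti h0J ht ht.1
    have habs : |α t ^3 - v| ≤ |α 0 ^3 - v| := by
      have h2 : (α t ^3 - v)^2 ≤ (α 0 ^3 - v)^2 := hEt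
      have := Real.sqrt_le_sqrt h2
      rwa [Real.sqrt_sq_eq_abs, Real.sqrt_sq_eq_abs] at this
    have h3 : α t ^ 3 ≤ v + |α 0 ^3 - v| := by
      have := (abs_le.mp habs).2
      linarith
    exact cube_upper (hposα t ht) h3
  have hMpos : (0:ℝ) < M := lt_of_lt_of_le one_pos (le_max_left _ _)
  -- uniform bound on 2k
  set C : ℝ := 2 * (M * (3*M^3 + 2*v)/(4*v^2)) with hCdef
  have hkC : ∀ t ∈ J, |2 * k t| ≤ C := by
    intro t ht
    have h1 := hposα t ht
    have h2 := hub t ht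
    have hcube : α t^3 ≤ M^3 := pow_le_pow_left₀ h1.le h2 3
    have h3 : α t * (3*α t^3 + 2*v) ≤ M * (3*M^3 + 2*v) :=
      mul_le_mul h2 (by nlinarith [pow_pos h1 3]) (by nlinarith [pow_pos h1 3]) hMpos.le
    have h4 : k t ≤ M * (3*M^3 + 2*v)/(4*v^2) := by
      apply div_le_div_of_nonneg_right h3 -- may need rename
      positivity
    have h5 : 0 ≤ 2 * k t := by
      have := hknonneg t ht; linarith
    rw [abs_of_nonneg h5]
    simp only [hCdef]
    linarith
  -- sign preservation of h = α³ - v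
  have hnz : α 0^3 - v ≠ 0 → ∀ t ∈ J, α t^3 - v ≠ 0 := by
    intro h0ne t ht hzero
    have hE0 : E 0 = 0 := by
      apply gronwall_zero (k := fun s => 2 * k s) (E := E) ht.1
      · intro s hs; exact hE s (domain_Icc_subset ht hs)
      · intro s hs; exact hkC s (domain_Icc_subset ht hs)
      · simp only [hEdef, hzero]; norm_num
    have : α 0^3 - v = 0 := by
      have := pow_eq_zero_iff (two_ne_zero) |>.mp hE0
      exact this
    exact h0ne this
  -- continuity of h on initial segments
  have hcont_h : ∀ t ∈ J, ContinuousOn (fun s => α s^3 - v) (Set.Icc 0 t) := by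
    intro t ht
    exact (((hcontα t ht).pow 3).sub continuousOn_const)
  obtain ⟨hlow, hmono⟩ : (∀ t ∈ J, min (α 0) (min 1 v) ≤ α t) ∧
      (MonotoneOn α J ∨ AntitoneOn α J) := by
    rcases lt_trichotomy (α 0^3 - v) 0 with hneg | hzero | hpos
    · -- h stays negative; α is monotone increasing
      have hlt : ∀ t ∈ J, α t^3 < v := by
        intro t ht
        have hp : 0 < -(α t^3 - v) := by
          apply stays_pos ht.1 ((hcont_h t ht).fun_neg)
          · intro s hs heq
            exact hnz hneg.ne s (domain_Icc_subset ht hs) (by simp only [neg_eq_zero] at heq; linarith [heq])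
          · exact neg_pos.mpr hneg
        linarith
      have hmon : MonotoneOn α J := by
        apply monotoneOn_of_hasDerivAt_nonneg (domain_convex T) hscalar
        intro t ht
        exact Fv_nonneg (hposα t ht) hv (hlt t ht).le
      refine ⟨fun t ht => ?_, Or.inl hmon⟩
      have := hmon h0J ht ht.1
      exact le_trans (min_le_left _ _) this
    · -- h ≡ 0 : α is constant
      have hconst : ∀ t ∈ J, α t = α 0 := by
        intro t ht
        have hEt : E t ≤ E 0 := hEanti h0J ht ht.1
        have hE0 : E 0 = 0 := by simp only [hEdef, hzero]; norm_num
        have hnn : 0 ≤ E t := sq_nonneg _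
        have hEt0 : E t = 0 := le_antisymm (hE0 ▸ hEt) hnn
        have h1 : α t^3 - v = 0 := pow_eq_zero_iff (two_ne_zero) |>.mp hEt0
        have h2 : α t^3 = α 0^3 := by linarith
        exact cube_inj (hposα t ht).le ha0.le h2
      refine ⟨fun t ht => ?_, Or.inl ?_⟩
      · rw [hconst t ht]; exact min_le_left _ _
      · intro a ha b hb _
        rw [hconst a ha, hconst b hb]
    · -- h stays positive; α is antitone
      have hgt : ∀ t ∈ J, v < α t^3 := by
        intro t ht
        have hp : 0 < α t^3 - v := by
          apply stays_pos ht.1 (hcont_h t ht)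
          · intro s hs
            exact hnz hpos.ne' s (domain_Icc_subset ht hs)
          · exact hpos
        linarith
      have hant : AntitoneOn α J := by
        apply antitoneOn_of_hasDerivAt_nonpos (domain_convex T) hscalar
        intro t ht
        exact Fv_nonpos (hposα t ht) hv (hgt t ht).le
      refine ⟨fun t ht => ?_, Or.inr hant⟩
      exact le_trans (min_le_right _ _) (cube_lower (hposα t ht) hv (hgt t ht).le)
  refine ⟨min (α 0) (min 1 v), M, lt_min ha0 (lt_min one_pos hv), fun t ht => ?_, hmono⟩
  exact ⟨hlow t ht, hub t ht, hposβ t ht, hvol t ht, hscalar t ht, hbeta t ht⟩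

lemma rpow_third_cube {x : ℝ} (hx : 0 < x) : (x^3) ^ ((1:ℝ)/3) = x := by
  rw [← Real.rpow_natCast x 3, ← Real.rpow_mul hx.le]
  norm_num

theorem limits {α β : ℝ → ℝ} (hsol : IsSolutionOn α β (domainUpTo ⊤))
    (ha0 : 0 < α 0) (hb0 : 0 < β 0) :
    Tendsto α atTop (𝓝 ((α 0 * β 0 ^ 2) ^ ((1:ℝ)/3))) ∧
      Tendsto β atTop (𝓝 ((α 0 * β 0 ^ 2) ^ ((1:ℝ)/3))) := by
  set v := α 0 * β 0 ^ 2 with hvdef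
  have hv : 0 < v := by positivity
  obtain ⟨m, M, hm, hP, _⟩ := core (T := ⊤) (by norm_num) hsol ha0 hb0
  rw [domain_top] at hP
  set E : ℝ → ℝ := fun t => (α t^3 - v)^2 with hEdef
  set k : ℝ → ℝ := fun t => α t * (3*α t^3 + 2*v)/(4*v^2) with hkdef
  set c : ℝ := m / v with hcdef
  have hc : 0 < c := div_pos hm hv
  have hE : ∀ t ∈ Set.Ici (0:ℝ), HasDerivAt E (-(2 * k t * E t)) t := fun t ht =>
    E_deriv hv.ne' (lt_of_lt_of_le hm (hP t ht).1).ne' (hP t ht).2.2.2.2.1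
  -- 2k ≥ c on Ici 0
  have hkc : ∀ t ∈ Set.Ici (0:ℝ), c ≤ 2 * k t := by
    intro t ht
    have h1 : m ≤ α t := (hP t ht).1
    have h0 : 0 < α t := lt_of_lt_of_le hm h1
    have h2 : m * (2*v) ≤ α t * (3*α t^3 + 2*v) := by nlinarith [pow_pos h0 3]
    have h3 : m * (2*v) / (4*v^2) ≤ k t := by
      apply div_le_div_of_nonneg_right h2
      positivity
    have h4 : c = 2 * (m * (2*v) / (4*v^2)) := by
      rw [hcdef]
      field_simp
      ring
    linarith
  -- g = E * exp(c t) is antitone on Ici 0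
  set g : ℝ → ℝ := fun t => E t * Real.exp (c * t) with hgdef
  have hganti : AntitoneOn g (Set.Ici (0:ℝ)) := by
    apply antitoneOn_of_hasDerivAt_nonpos (convex_Ici 0)
      (g' := fun t => -(2 * k t * E t) * Real.exp (c * t) + E t * (Real.exp (c * t) * c))
    · intro t ht
      have hexp : HasDerivAt (fun t => Real.exp (c * t)) (Real.exp (c * t) * c) t := by
        have h1 : HasDerivAt (fun t : ℝ => c * t) c t := by
          simpa using (hasDerivAt_id t).const_mul c
        simpa using h1.exp
      exact (hE t ht).mul hexp
    · intro t ht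
      have h1 := hkc t ht
      have h2 : 0 ≤ E t := sq_nonneg _
      have h3 : 0 < Real.exp (c * t) := Real.exp_pos _
      have h4 : 0 ≤ (2 * k t - c) * E t * Real.exp (c * t) :=
        mul_nonneg (mul_nonneg (by linarith) h2) h3.le
      nlinarith [h4]
  -- decay of E
  have hEbound : ∀ t ∈ Set.Ici (0:ℝ), E t ≤ E 0 * Real.exp (-(c * t)) := by
    intro t ht
    have := hganti (Set.self_mem_Ici) ht ht
    simp only [hgdef, mul_zero, Real.exp_zero, mul_one] at this
    have h6 := mul_le_mul_of_nonneg_right this (inv_nonneg.mpr (Real.exp_pos (c*t)).le)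
    rw [mul_assoc, mul_inv_cancel₀ (Real.exp_pos (c*t)).ne', mul_one] at h6
    rwa [Real.exp_neg]
  have hEtends : Tendsto E atTop (𝓝 0) := by
    apply squeeze_zero' (f := E) (g := fun t => E 0 * Real.exp (-(c * t)))
    · filter_upwards with t; exact sq_nonneg _
    · filter_upwards [eventually_ge_atTop (0:ℝ)] with t ht
      exact hEbound t ht
    · have h8 : Tendsto (fun t => E 0 * Real.exp (-(c * t))) atTop (𝓝 (E 0 * 0)) :=
        Tendsto.const_mul _ (Real.tendsto_exp_neg_atTop_nhds_zero.comp
          (tendsto_id.const_mul_atTop hc))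
      simpa using h8
  -- hence α³ → v
  have hhabs : Tendsto (fun t => |α t^3 - v|) atTop (𝓝 0) := by
    have : Tendsto (fun t => Real.sqrt (E t)) atTop (𝓝 (Real.sqrt 0)) :=
      (Real.continuous_sqrt.tendsto 0).comp hEtends
    rw [Real.sqrt_zero] at this
    apply this.congr
    intro t
    simp only [hEdef]
    exact Real.sqrt_sq_eq_abs _
  have hcube : Tendsto (fun t => α t^3) atTop (𝓝 v) := by
    have h7 : Tendsto (fun t => α t^3 - v) atTop (𝓝 0) := by
      apply squeeze_zero_norm _ hhabs
      intro t
      simp [norm_eq_abs]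
    have h8 := h7.add_const v
    simpa using h8
  -- α → v^(1/3)
  have hαlim : Tendsto α atTop (𝓝 (v ^ ((1:ℝ)/3))) := by
    have hcont : ContinuousAt (fun y : ℝ => y ^ ((1:ℝ)/3)) v :=
      Real.continuousAt_rpow_const v _ (Or.inl hv.ne')
    have := hcont.tendsto.comp hcube
    apply this.congr'
    filter_upwards [eventually_ge_atTop (0:ℝ)] with t ht
    exact rpow_third_cube (lt_of_lt_of_le hm (hP t ht).1)
  refine ⟨hαlim, ?_⟩
  -- β → sqrt (v / v^(1/3)) = v^(1/3)
  have hL : (0:ℝ) < v ^ ((1:ℝ)/3) := Real.rpow_pos_of_pos hv _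
  have hβlim : Tendsto (fun t => Real.sqrt (v / α t)) atTop
      (𝓝 (Real.sqrt (v / v ^ ((1:ℝ)/3)))) := by
    apply (Real.continuous_sqrt.tendsto _).comp
    exact (tendsto_const_nhds.div hαlim hL.ne')
  have hval : Real.sqrt (v / v ^ ((1:ℝ)/3)) = v ^ ((1:ℝ)/3) := by
    rw [show v / v ^ ((1:ℝ)/3) = v ^ ((1:ℝ) - (1:ℝ)/3) by
      rw [Real.rpow_sub hv, Real.rpow_one]]
    rw [Real.sqrt_eq_rpow, ← Real.rpow_mul hv.le]
    norm_num
  rw [hval] at hβlim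
  apply hβlim.congr'
  filter_upwards [eventually_ge_atTop (0:ℝ)] with t ht
  exact ((hP t ht).2.2.2.2.2).symm

theorem T_top {T : ℝ≥0∞} {α β : ℝ → ℝ} (hmax : IsMaxSolution α β T)
    (ha0 : 0 < α 0) (hb0 : 0 < β 0) : T = ⊤ := by
  obtain ⟨hT, hsol, hnotext⟩ := hmax
  by_contra hTne
  set T₀ := T.toReal with hT₀def
  have hT₀ : 0 < T₀ := ENNReal.toReal_pos hT.ne' hTne
  have hJ : domainUpTo T = Set.Ico 0 T₀ := domain_eq_Ico hTne
  set v := α 0 * β 0 ^ 2 with hvdef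
  have hv : 0 < v := by positivity
  obtain ⟨m, M, hm, hP, hmono⟩ := core hT hsol ha0 hb0
  rw [hJ] at hP hmono
  -- limits of α and β at T₀⁻
  obtain ⟨L, hmL, hαlim⟩ := tendsto_endpoint hT₀ (fun t ht => ⟨(hP t ht).1, (hP t ht).2.1⟩) hmono
  have hL : 0 < L := lt_of_lt_of_le hm hmL
  set L' : ℝ := Real.sqrt (v / L) with hL'def
  have hL' : 0 < L' := Real.sqrt_pos.mpr (div_pos hv hL)
  have hβlim : Tendsto β (𝓝[<] T₀) (𝓝 L') := by
    have h1 : Tendsto (fun t => Real.sqrt (v / α t)) (𝓝[<] T₀) (𝓝 (Real.sqrt (v / L))) :=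
      (Real.continuous_sqrt.tendsto _).comp (tendsto_const_nhds.div hαlim hL.ne')
    apply h1.congr'
    filter_upwards [Ioo_mem_nhdsLT_of_mem (Set.right_mem_Ioc.mpr hT₀)] with t ht
    exact ((hP t ⟨ht.1.le, ht.2⟩).2.2.2.2.2).symm
  set p : ℝ × ℝ := (L, L') with hpdef
  set fbar : ℝ → ℝ × ℝ := fun t => if t < T₀ then (α t, β t) else p with hfbardef
  have hfbar_lt : ∀ t, t < T₀ → fbar t = (α t, β t) := fun t ht => if_pos ht
  have hfbar_T₀ : fbar T₀ = p := if_neg (lt_irrefl T₀)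
  have hfbar_tend : Tendsto fbar (𝓝[<] T₀) (𝓝 p) := by
    apply Tendsto.congr' _ (hαlim.prodMk_nhds hβlim)
    filter_upwards [self_mem_nhdsWithin] with t ht
    exact (hfbar_lt t ht).symm
  -- derivative of fbar on [0, T₀)
  have hderiv_pair : ∀ t ∈ Set.Ico 0 T₀, HasDerivAt fbar (Vf (fbar t)) t := by
    intro t ht
    have htJ : t ∈ domainUpTo T := by rw [hJ]; exact ht
    obtain ⟨hαne, hβne, hdα, hdβ⟩ := hsol t htJ
    have hpair : HasDerivAt (fun s => (α s, β s)) (G2 (α t) (β t)) t := by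
      have := hdα.prodMk hdβ
      simpa using this
    have heq : fbar =ᶠ[𝓝 t] (fun s => (α s, β s)) := by
      filter_upwards [Iio_mem_nhds ht.2] with s hs
      exact hfbar_lt s hs
    have := hpair.congr_of_eventuallyEq heq
    have hval : Vf (fbar t) = G2 (α t) (β t) := by
      rw [hfbar_lt t ht.2]; rfl
    rwa [hval]
  -- derivative of fbar at the endpoint T₀ from the left
  have hend : HasDerivWithinAt fbar (Vf p) (Set.Iic T₀) T₀ := by
    apply hasDerivWithinAt_Iic_of_tendsto_deriv (s := Set.Ioo 0 T₀)
    · intro t ht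
      exact (hderiv_pair t ⟨ht.1.le, ht.2⟩).differentiableAt.differentiableWithinAt
    · show Tendsto fbar (𝓝[Set.Ioo 0 T₀] T₀) (𝓝 (fbar T₀))
      rw [hfbar_T₀]
      exact hfbar_tend.mono_left (nhdsWithin_mono _ Set.Ioo_subset_Iio_self)
    · exact Ioo_mem_nhdsLT_of_mem (Set.right_mem_Ioc.mpr hT₀)
    · have hVc : ContinuousAt Vf p := (contDiffAt_Vf (by simpa using hL.ne')
        (by simpa using hL'.ne')).continuousAt
      have h2 : Tendsto (fun x => Vf (fbar x)) (𝓝[<] T₀) (𝓝 (Vf p)) :=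
        hVc.tendsto.comp hfbar_tend
      apply h2.congr'
      filter_upwards [Ioo_mem_nhdsLT_of_mem (Set.right_mem_Ioc.mpr hT₀)] with t ht
      exact ((hderiv_pair t ⟨ht.1.le, ht.2⟩).deriv).symm
  -- local solution around the limit point
  have hVC : ContDiffAt ℝ 1 Vf p :=
    contDiffAt_Vf (by simpa using hL.ne') (by simpa using hL'.ne')
  obtain ⟨γ, hγT₀, e, he, hγd⟩ := hVC.exists_forall_mem_closedBall_exists_eq_forall_mem_Ioo_hasDerivAt₀ T₀
  -- Lipschitz neighborhood inside the positivity region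
  obtain ⟨K, sl, hsl, hlip⟩ := hVC.exists_lipschitzOnWith
  set U : Set (ℝ × ℝ) := {q | 0 < q.1 ∧ 0 < q.2} with hUdef
  have hUopen : IsOpen U :=
    (isOpen_lt continuous_const continuous_fst).inter (isOpen_lt continuous_const continuous_snd)
  have hpU : p ∈ U := ⟨hL, hL'⟩
  obtain ⟨r, hr, hball⟩ := Metric.mem_nhds_iff.mp (Filter.inter_mem hsl (hUopen.mem_nhds hpU))
  have hball' : Metric.closedBall p (r/2) ⊆ sl ∩ U :=
    le_trans (Metric.closedBall_subset_ball (by linarith)) hball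
  -- γ is continuous at T₀; it stays in the closed ball near T₀
  have hγcont : ContinuousAt γ T₀ :=
    (hγd T₀ ⟨by linarith, by linarith⟩).continuousAt
  obtain ⟨δ₁, hδ₁, hγball⟩ := Metric.continuousAt_iff.mp hγcont (r/2) (by linarith)
  -- fbar is eventually in the closed ball
  have hev : ∀ᶠ t in 𝓝[<] T₀, fbar t ∈ Metric.closedBall p (r/2) :=
    hfbar_tend (Metric.closedBall_mem_nhds p (by linarith))
  obtain ⟨a₀, ha₀, hsub⟩ := mem_nhdsLT_iff_exists_Ioo_subset.mp hev
  set a : ℝ := max a₀ (max 0 (max (T₀ - e/2) (T₀ - δ₁/2))) with hadef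
  have haT₀ : a < T₀ := by
    apply max_lt ha₀ (max_lt hT₀ (max_lt (by linarith) (by linarith)))
  have ha0' : 0 ≤ a := le_trans (le_max_left 0 _) (le_max_right a₀ _)
  have hae : T₀ - e/2 ≤ a :=
    le_trans (le_trans (le_max_left _ _) (le_max_right 0 _)) (le_max_right a₀ _)
  have haδ : T₀ - δ₁/2 ≤ a :=
    le_trans (le_trans (le_max_right _ _) (le_max_right 0 _)) (le_max_right a₀ _)
  have hIccIoo : Set.Icc a T₀ ⊆ Set.Ioo (T₀ - e) (T₀ + e) := by
    intro s hs
    constructor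
    · linarith [hs.1]
    · linarith [hs.2]
  -- uniqueness: fbar = γ on [a, T₀]
  have huniq : Set.EqOn fbar γ (Set.Icc a T₀) := by
    apply ODE_solution_unique_of_mem_Icc_left
      (v := fun _ => Vf) (s := fun _ => Metric.closedBall p (r/2)) (K := K)
    · intro _ _
      exact hlip.mono (le_trans hball' (Set.inter_subset_left))
    · -- continuity of fbar on [a, T₀]
      intro s hs
      rcases lt_or_eq_of_le hs.2 with hlt | heq
      · exact (hderiv_pair s ⟨le_trans ha0' hs.1, hlt⟩).continuousAt.continuousWithinAt
      · rw [heq]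
        apply ContinuousWithinAt.mono _ (Set.Icc_subset_Iic_self)
        show Tendsto fbar (𝓝[Set.Iic T₀] T₀) (𝓝 (fbar T₀))
        rw [hfbar_T₀, ← Set.Iio_union_right, nhdsWithin_union, nhdsWithin_singleton,
          tendsto_sup]
        refine ⟨hfbar_tend, ?_⟩
        have hpure := tendsto_pure_nhds fbar T₀
        rwa [hfbar_T₀] at hpure
    · intro s hs
      rcases lt_or_eq_of_le hs.2 with hlt | heq
      · exact (hderiv_pair s ⟨le_trans ha0' hs.1.le, hlt⟩).hasDerivWithinAt
      · rw [heq, hfbar_T₀]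
        exact hend
    · intro s hs
      rcases lt_or_eq_of_le hs.2 with hlt | heq
      · exact hsub ⟨lt_of_le_of_lt (le_max_left a₀ _) hs.1, hlt⟩
      · rw [heq, hfbar_T₀]
        exact Metric.mem_closedBall_self (by linarith)
    · intro s hs
      exact ((hγd s (hIccIoo hs)).continuousAt).continuousWithinAt
    · intro s hs
      exact (hγd s (hIccIoo ⟨hs.1.le, hs.2⟩)).hasDerivWithinAt
    · intro s hs
      have hd : dist s T₀ < δ₁ := by
        rw [Real.dist_eq, abs_of_nonpos (by linarith [hs.2])]
        linarith [hs.1]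
      have hgb := hγball hd
      rw [hγT₀] at hgb
      exact Metric.mem_closedBall.mpr hgb.le
    · rw [hfbar_T₀, hγT₀]
  -- the extension beyond T₀
  set δ₂ : ℝ := min δ₁ e / 2 with hδ₂def
  have hδ₂ : 0 < δ₂ := half_pos (lt_min hδ₁ he)
  have hδ₂δ₁ : δ₂ ≤ δ₁ / 2 := by
    have := min_le_left δ₁ e
    simp only [hδ₂def]
    linarith
  have hδ₂e : δ₂ ≤ e / 2 := by
    have := min_le_right δ₁ e
    simp only [hδ₂def]
    linarith
  set T' : ℝ≥0∞ := ENNReal.ofReal (T₀ + δ₂) with hT'def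
  have hTT' : T < T' := by
    have h1 : T = ENNReal.ofReal T₀ := (ENNReal.ofReal_toReal hTne).symm
    rw [h1, hT'def, ENNReal.ofReal_lt_ofReal_iff (by linarith)]
    linarith
  set αext : ℝ → ℝ := fun t => if t < T₀ then α t else (γ t).1 with hαext
  set βext : ℝ → ℝ := fun t => if t < T₀ then β t else (γ t).2 with hβext
  have hagree : ∀ t ∈ domainUpTo T, αext t = α t ∧ βext t = β t := by
    intro t ht
    rw [hJ] at ht
    exact ⟨if_pos ht.2, if_pos ht.2⟩
  have hγeq : ∀ s, a < s → αext s = (γ s).1 ∧ βext s = (γ s).2 := by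
    intro s hs
    rcases lt_or_ge s T₀ with h | h
    · have hu := huniq ⟨hs.le, h.le⟩
      rw [hfbar_lt s h] at hu
      have h1 : α s = (γ s).1 := by rw [← hu]
      have h2 : β s = (γ s).2 := by rw [← hu]
      exact ⟨(if_pos h).trans h1, (if_pos h).trans h2⟩
    · exact ⟨if_neg (not_lt.mpr h), if_neg (not_lt.mpr h)⟩
  have hsol' : IsSolutionOn αext βext (domainUpTo T') := by
    intro t ht
    have hTne' : T' ≠ ⊤ := ENNReal.ofReal_ne_top
    rw [domain_eq_Ico hTne', hT'def, ENNReal.toReal_ofReal (by linarith)] at ht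
    rcases lt_or_ge t T₀ with hlt | hge
    · -- still in the old domain
      have htJ : t ∈ domainUpTo T := by rw [hJ]; exact ⟨ht.1, hlt⟩
      obtain ⟨hαne, hβne, hdα, hdβ⟩ := hsol t htJ
      have heqα : αext =ᶠ[𝓝 t] α := by
        filter_upwards [Iio_mem_nhds hlt] with s hs
        exact if_pos hs
      have heqβ : βext =ᶠ[𝓝 t] β := by
        filter_upwards [Iio_mem_nhds hlt] with s hs
        exact if_pos hs
      have hvα : αext t = α t := if_pos hlt
      have hvβ : βext t = β t := if_pos hlt
      refine ⟨by rw [hvα]; exact hαne, by rw [hvβ]; exact hβne, ?_, ?_⟩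
      · rw [hvα, hvβ]
        exact hdα.congr_of_eventuallyEq heqα
      · rw [hvα, hvβ]
        exact hdβ.congr_of_eventuallyEq heqβ
    · -- in the new piece: use γ
      have haT : a < t := lt_of_lt_of_le haT₀ hge
      have htIoo : t ∈ Set.Ioo (T₀ - e) (T₀ + e) :=
        ⟨by linarith, by linarith [ht.2]⟩
      have hdγ := hγd t htIoo
      have hγU : γ t ∈ U := by
        have hd : dist t T₀ < δ₁ := by
          rw [Real.dist_eq, abs_of_nonneg (by linarith)]
          linarith [ht.2]
        have hb := hγball hd
        rw [hγT₀] at hb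
        exact (hball' (Metric.mem_closedBall.mpr hb.le)).2
      have hγeqt := hγeq t haT
      have heqα : αext =ᶠ[𝓝 t] (fun s => (γ s).1) := by
        filter_upwards [Ioi_mem_nhds haT] with s hs
        exact (hγeq s hs).1
      have heqβ : βext =ᶠ[𝓝 t] (fun s => (γ s).2) := by
        filter_upwards [Ioi_mem_nhds haT] with s hs
        exact (hγeq s hs).2
      have hd1 : HasDerivAt (fun s => (γ s).1) (Vf (γ t)).1 t :=
        (ContinuousLinearMap.fst ℝ ℝ ℝ).hasFDerivAt.comp_hasDerivAt t hdγ
      have hd2 : HasDerivAt (fun s => (γ s).2) (Vf (γ t)).2 t :=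
        (ContinuousLinearMap.snd ℝ ℝ ℝ).hasFDerivAt.comp_hasDerivAt t hdγ
      have hval : G2 (αext t) (βext t) = Vf (γ t) := by
        rw [hγeqt.1, hγeqt.2]; rfl
      refine ⟨?_, ?_, ?_, ?_⟩
      · rw [hγeqt.1]; exact hγU.1.ne'
      · rw [hγeqt.2]; exact hγU.2.ne'
      · rw [show (G2 (αext t) (βext t)).1 = (Vf (γ t)).1 from congrArg Prod.fst hval]
        exact hd1.congr_of_eventuallyEq heqα
      · rw [show (G2 (αext t) (βext t)).2 = (Vf (γ t)).2 from congrArg Prod.snd hval]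
        exact hd2.congr_of_eventuallyEq heqβ
  exact hnotext ⟨T', αext, βext, hTT', hsol', hagree⟩

end Auxiliary

/-- Stability (case `aμ = -1`, any `ε > 0`): the maximal solution starting at the
volume-normalized Berger metric, `α(0) = √(c(ε))·ε`, `β(0) = √(c(ε))` with
`c(ε) = (2π²ε)^(-2/3)`, exists for all time and converges to the volume-normalized
round metric: `α(t), β(t) → (2π²)^(-1/3)`. -/
theorem stability_amu_neg_one (ε : ℝ) (hε : 0 < ε) (α β : ℝ → ℝ) (T : ℝ≥0∞)
    (hmax : IsMaxSolution α β T)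
    (hα0 : α 0 = Real.sqrt ((2 * π^2 * ε) ^ (-(2:ℝ)/3)) * ε)
    (hβ0 : β 0 = Real.sqrt ((2 * π^2 * ε) ^ (-(2:ℝ)/3))) :
    T = ⊤ ∧ Tendsto α atTop (𝓝 ((2 * π^2) ^ (-(1:ℝ)/3))) ∧
      Tendsto β atTop (𝓝 ((2 * π^2) ^ (-(1:ℝ)/3))) := by
  have hπ : (0:ℝ) < 2 * π^2 := by positivity
  have hX : (0:ℝ) < 2 * π^2 * ε := by positivity
  have hc : (0:ℝ) < (2 * π^2 * ε) ^ (-(2:ℝ)/3) := Real.rpow_pos_of_pos hX _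
  have ha0 : 0 < α 0 := by
    rw [hα0]; exact mul_pos (Real.sqrt_pos.mpr hc) hε
  have hb0 : 0 < β 0 := by
    rw [hβ0]; exact Real.sqrt_pos.mpr hc
  -- the invariant value
  have hsq : Real.sqrt ((2*π^2*ε) ^ (-(2:ℝ)/3)) = (2*π^2*ε) ^ (-(1:ℝ)/3) := by
    rw [Real.sqrt_eq_rpow, ← Real.rpow_mul hX.le]
    norm_num
  have hvval : α 0 * β 0 ^ 2 = (2 * π^2)⁻¹ := by
    rw [hα0, hβ0, hsq]
    rw [← Real.rpow_natCast ((2*π^2*ε) ^ (-(1:ℝ)/3)) 2, ← Real.rpow_mul hX.le]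
    rw [show (2*π^2*ε) ^ (-(1:ℝ)/3) * ε * (2*π^2*ε) ^ (-(1:ℝ)/3 * (2:ℕ))
        = ε * ((2*π^2*ε) ^ (-(1:ℝ)/3) * (2*π^2*ε) ^ (-(1:ℝ)/3 * (2:ℕ))) by push_cast; ring]
    rw [← Real.rpow_add hX]
    rw [show (-(1:ℝ)/3 + -(1:ℝ)/3 * (2:ℕ)) = -1 by push_cast; norm_num]
    rw [Real.rpow_neg_one]
    have hεne : ε ≠ 0 := hε.ne'
    have hπne : (2 * π^2 : ℝ) ≠ 0 := hπ.ne'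
    field_simp
  have hTtop : T = ⊤ := T_top hmax ha0 hb0
  subst hTtop
  obtain ⟨hlim1, hlim2⟩ := limits hmax.2.1 ha0 hb0
  have hvl : (α 0 * β 0 ^ 2) ^ ((1:ℝ)/3) = (2 * π^2) ^ (-(1:ℝ)/3) := by
    rw [hvval, ← Real.rpow_neg_one (2*π^2), ← Real.rpow_mul hπ.le]
    norm_num
  rw [hvl] at hlim1 hlim2
  exact ⟨rfl, hlim1, hlim2⟩
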